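/- Let γ_AB be a bipartite state on ℂ^{d_A} ⊗ ℂ^{d_B}. If rank γ_AB < d_A and rank γ_A = d_A (i.e. γ_A is invertible), then γ_AB is not separable. -/

import Mathlib

open Matrix Kronecker
open scoped ComplexOrder

noncomputable section

/-- `|v⟩⟨v|`, the rank-one matrix `v v*`. -/
def ketBra {d : ℕ} (v : Fin d → ℂ) : Matrix (Fin d) (Fin d) ℂ :=
  vecMulVec v (star v)

/-- Partial trace over the `B` factor: `(Tr_B γ)_{jk} = Σ_m γ_{(j,m),(k,m)}`. -/
def trB {dA dB : ℕ} (γ : Matrix (Fin dA × Fin dB) (Fin dA × Fin dB) ℂ) :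
    Matrix (Fin dA) (Fin dA) ℂ :=
  Matrix.of fun j k => ∑ m : Fin dB, γ (j, m) (k, m)

/-- Partial trace over the `A` factor: `(Tr_A γ)_{mn} = Σ_j γ_{(j,m),(j,n)}`. -/
def trA {dA dB : ℕ} (γ : Matrix (Fin dA × Fin dB) (Fin dA × Fin dB) ℂ) :
    Matrix (Fin dB) (Fin dB) ℂ :=
  Matrix.of fun m n => ∑ j : Fin dA, γ (j, m) (j, n)

/-- A positive semidefinite matrix indexed by `(Fin dA) × (Fin dB)` is separable if it is
a finite positive combination of Kronecker products `|a⟩⟨a| ⊗ |b⟩⟨b|`. -/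
def MatrixSeparable {dA dB : ℕ} (γ : Matrix (Fin dA × Fin dB) (Fin dA × Fin dB) ℂ) : Prop :=
  ∃ (n : ℕ) (lam : Fin n → ℝ) (a : Fin n → Fin dA → ℂ) (b : Fin n → Fin dB → ℂ),
    (∀ i, 0 ≤ lam i) ∧
      γ = ∑ i, (lam i : ℂ) • (ketBra (a i) ⊗ₖ ketBra (b i))


section Aux

variable {dA dB d n : ℕ} {ι : Type*} [Fintype ι]

/-- General-index version of `ketBra`. -/
def kB (v : ι → ℂ) : Matrix ι ι ℂ := vecMulVec v (star v)

lemma ketBra_eq_kB (v : Fin d → ℂ) : ketBra v = kB v := rfl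

lemma ketBra_kron (a : Fin dA → ℂ) (b : Fin dB → ℂ) :
    ketBra a ⊗ₖ ketBra b = kB (fun p : Fin dA × Fin dB => a p.1 * b p.2) := by
  ext ⟨j, m⟩ ⟨k, n⟩
  simp [ketBra, kB, vecMulVec_apply, star_mul']
  ring

lemma kB_mulVec (v : ι → ℂ) (x : ι → ℂ) :
    kB v *ᵥ x = (star v ⬝ᵥ x) • v := by
  funext j
  simp only [kB, vecMulVec, mulVec, dotProduct, of_apply, Pi.smul_apply, smul_eq_mul,
    Finset.sum_mul, Pi.star_apply]
  exact Finset.sum_congr rfl fun k _ => by ring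

lemma sum_smul_mulVec (c : Fin n → ℂ) (M : Fin n → Matrix ι ι ℂ) (x : ι → ℂ) :
    (∑ i, c i • M i) *ᵥ x = ∑ i, c i • (M i *ᵥ x) := by
  funext j
  simp only [mulVec, dotProduct, Finset.sum_apply, Matrix.sum_apply, Matrix.smul_apply,
    Pi.smul_apply, smul_eq_mul, Finset.sum_mul, Finset.mul_sum]
  rw [Finset.sum_comm]
  exact Finset.sum_congr rfl fun i _ => Finset.sum_congr rfl fun k _ => by ring

lemma trB_sum_smul (c : Fin n → ℂ)
    (M : Fin n → Matrix (Fin dA × Fin dB) (Fin dA × Fin dB) ℂ) :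
    trB (∑ i, c i • M i) = ∑ i, c i • trB (M i) := by
  ext j k
  simp only [trB, of_apply, Finset.sum_apply, Matrix.sum_apply, Matrix.smul_apply,
    smul_eq_mul, Finset.mul_sum]
  rw [Finset.sum_comm]

lemma trB_ketBra_kron (a : Fin dA → ℂ) (b : Fin dB → ℂ) :
    trB (ketBra a ⊗ₖ ketBra b) = (∑ m, b m * star (b m)) • ketBra a := by
  ext j k
  simp only [trB, of_apply, kroneckerMap_apply, ketBra, vecMulVec_apply, Pi.star_apply,
    Matrix.smul_apply, smul_eq_mul, Finset.sum_mul]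
  exact Finset.sum_congr rfl fun m _ => by ring

lemma dp_sum (x : ι → ℂ) (v : Fin n → ι → ℂ) :
    x ⬝ᵥ (∑ i, v i) = ∑ i, x ⬝ᵥ v i := by
  simp only [dotProduct, Finset.sum_apply, Finset.mul_sum]
  rw [Finset.sum_comm]

end Aux


/-- If a bipartite state `γ_AB` on `ℂ^{d_A} ⊗ ℂ^{d_B}` has
`rank γ_AB < d_A` and `rank γ_A = d_A`, then `γ_AB` is not separable. -/
theorem not_separable_of_rank_lt_dimA {dA dB : ℕ}
    (γ : Matrix (Fin dA × Fin dB) (Fin dA × Fin dB) ℂ)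
    (hpsd : γ.PosSemidef) (htr : γ.trace = 1)
    (hrank : γ.rank < dA) (hrankA : (trB γ).rank = dA) :
    ¬ MatrixSeparable γ := by
  rintro ⟨n, lam, a, b, hlam, hγ⟩
  classical
  set w : Fin n → (Fin dA × Fin dB → ℂ) := fun i p => a i p.1 * b i p.2 with hwdef
  have hγ' : γ = ∑ i, (lam i : ℂ) • kB (w i) := by
    rw [hγ]; exact Finset.sum_congr rfl fun i _ => by rw [ketBra_kron]
  set S : Set (Fin n) := {i | lam i ≠ 0 ∧ b i ≠ 0} with hSdef
  -- Step A : the a i for i ∈ S span ℂ^{dA}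
  have htrB : trB γ = ∑ i, ((lam i : ℂ) * ∑ m, b i m * star (b i m)) • ketBra (a i) := by
    rw [hγ, trB_sum_smul]
    exact Finset.sum_congr rfl fun i _ => by rw [trB_ketBra_kron, smul_smul]
  have hfintot : Module.finrank ℂ (Fin dA → ℂ) = dA := by
    simp [Module.finrank_pi]
  have hsub : LinearMap.range (trB γ).mulVecLin ≤ Submodule.span ℂ (a '' S) := by
    rintro y ⟨x, rfl⟩
    rw [Matrix.mulVecLin_apply, htrB, sum_smul_mulVec]
    refine Submodule.sum_mem _ fun i _ => ?_
    by_cases hi : i ∈ S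
    · rw [ketBra_eq_kB, kB_mulVec]
      exact Submodule.smul_mem _ _ (Submodule.smul_mem _ _
        (Submodule.subset_span ⟨i, hi, rfl⟩))
    · have h0 : (lam i : ℂ) * ∑ m, b i m * star (b i m) = 0 := by
        rcases not_and_or.mp hi with h | h
        · simp at h; simp [h]
        · simp at h; simp [h]
      rw [h0, zero_smul]
      exact Submodule.zero_mem _
  have hspanA : Submodule.span ℂ (a '' S) = ⊤ := by
    apply Submodule.eq_top_of_finrank_eq
    have h1 : dA ≤ Module.finrank ℂ (Submodule.span ℂ (a '' S)) := by
      calc dA = (trB γ).rank := hrankA.symm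
        _ = Module.finrank ℂ (LinearMap.range (trB γ).mulVecLin) := rfl
        _ ≤ _ := Submodule.finrank_mono hsub
    have h2 := Submodule.finrank_le (Submodule.span ℂ (a '' S))
    rw [hfintot] at h2 ⊢
    omega
  -- basis extraction
  obtain ⟨t, hts, hspan_t, hli⟩ := exists_linearIndependent ℂ (a '' S)
  have htfin : t.Finite := ((Set.toFinite S).image a).subset hts
  haveI : Fintype t := htfin.fintype
  have hcard : Fintype.card t = dA := by
    have h3 : Module.finrank ℂ (Submodule.span ℂ t) = dA := by
      rw [hspan_t, hspanA, finrank_top, hfintot]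
    rw [finrank_span_set_eq_card hli, Set.toFinset_card] at h3
    exact h3
  have hchoice : ∀ x : t, ∃ i, i ∈ S ∧ a i = (x : Fin dA → ℂ) := fun x => hts x.2
  choose idx hidxS hidxa using hchoice
  -- the w (idx x) are linearly independent
  have hliw : LinearIndependent ℂ (fun x : t => w (idx x)) := by
    rw [Fintype.linearIndependent_iff]
    intro g hg x0
    obtain ⟨m0, hm0⟩ : ∃ m0, b (idx x0) m0 ≠ 0 := by
      by_contra h
      push_neg at h
      exact (hidxS x0).2 (funext h)
    have key : ∀ x : t, g x * b (idx x) m0 = 0 := by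
      apply Fintype.linearIndependent_iff.mp hli
      funext j
      have h2 := congrFun hg (j, m0)
      simp only [Finset.sum_apply, Pi.smul_apply, smul_eq_mul, Pi.zero_apply] at h2 ⊢
      rw [← h2]
      refine Finset.sum_congr rfl fun x _ => ?_
      rw [← hidxa x]
      simp only [hwdef]
      ring
    have hk := key x0
    rcases mul_eq_zero.mp hk with h | h
    · exact h
    · exact absurd h hm0
  -- move to EuclideanSpace
  let e : (Fin dA × Fin dB → ℂ) ≃ₗ[ℂ] EuclideanSpace ℂ (Fin dA × Fin dB) :=
    (WithLp.linearEquiv 2 ℂ (Fin dA × Fin dB → ℂ)).symm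
  set W : Submodule ℂ (EuclideanSpace ℂ (Fin dA × Fin dB)) :=
    Submodule.span ℂ (Set.range fun x : t => e (w (idx x))) with hWdef
  have hWrank : Module.finrank ℂ W = dA := by
    have h6 := finrank_span_eq_card (hliw.map' e.toLinearMap e.ker)
    rw [hWdef]
    simpa [Function.comp_def] using h6.trans hcard
  -- kernel of γ is orthogonal to W
  have hz : ∀ x, γ *ᵥ x = 0 → ∀ i, lam i ≠ 0 → star (w i) ⬝ᵥ x = 0 := by
    intro x hx0 i hi
    have hq : ∑ i, lam i * Complex.normSq (star (w i) ⬝ᵥ x) = 0 := by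
      have hc : (↑(∑ i, lam i * Complex.normSq (star (w i) ⬝ᵥ x)) : ℂ)
          = star x ⬝ᵥ (γ *ᵥ x) := by
        rw [hγ', sum_smul_mulVec, dp_sum]
        push_cast
        refine Finset.sum_congr rfl fun i _ => ?_
        rw [kB_mulVec, smul_smul, dotProduct_smul, star_dotProduct]
        rw [Complex.normSq_eq_conj_mul_self]
        simp only [smul_eq_mul, RCLike.star_def, Complex.conj_conj]
        ring
      rw [hx0] at hc
      simp only [dotProduct_zero] at hc
      exact_mod_cast hc
    have hnn : ∀ j ∈ Finset.univ, 0 ≤ lam j * Complex.normSq (star (w j) ⬝ᵥ x) :=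
      fun j _ => mul_nonneg (hlam j) (Complex.normSq_nonneg _)
    have h0 := (Finset.sum_eq_zero_iff_of_nonneg hnn).mp hq i (Finset.mem_univ i)
    rcases mul_eq_zero.mp h0 with h | h
    · exact absurd h hi
    · exact Complex.normSq_eq_zero.mp h
  have hker : ∀ x ∈ LinearMap.ker γ.mulVecLin, e x ∈ Wᗮ := by
    intro x hx
    have hx0 : γ *ᵥ x = 0 := hx
    rw [Submodule.mem_orthogonal]
    intro u hu
    induction hu using Submodule.span_induction with
    | mem u hu =>
        obtain ⟨x', rfl⟩ := hu
        have h5 : star (w (idx x')) ⬝ᵥ x = 0 := hz x hx0 (idx x') (hidxS x').1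
        rw [← h5]
        simp [PiLp.inner_apply, dotProduct, e, RCLike.inner_apply, WithLp.linearEquiv]
        exact Finset.sum_congr rfl fun _ _ => mul_comm _ _
    | zero => simp
    | add u v hu hv h1 h2 => rw [inner_add_left, h1, h2, add_zero]
    | smul c u hu h1 => rw [inner_smul_left, h1, mul_zero]
  -- dimension count
  have hker_le : Module.finrank ℂ (LinearMap.ker γ.mulVecLin) ≤ Module.finrank ℂ Wᗮ := by
    have hmap : (LinearMap.ker γ.mulVecLin).map e.toLinearMap ≤ Wᗮ := by
      rintro _ ⟨x, hx, rfl⟩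
      exact hker x hx
    calc Module.finrank ℂ (LinearMap.ker γ.mulVecLin)
        = Module.finrank ℂ ((LinearMap.ker γ.mulVecLin).map e.toLinearMap) :=
          (LinearEquiv.finrank_map_eq e _).symm
      _ ≤ Module.finrank ℂ Wᗮ := Submodule.finrank_mono hmap
  have hWperp : Module.finrank ℂ W + Module.finrank ℂ Wᗮ = dA * dB := by
    rw [Submodule.finrank_add_finrank_orthogonal, finrank_euclideanSpace]
    simp
  have hrn : Module.finrank ℂ (LinearMap.range γ.mulVecLin)
      + Module.finrank ℂ (LinearMap.ker γ.mulVecLin) = dA * dB := by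
    rw [LinearMap.finrank_range_add_finrank_ker, Module.finrank_pi]
    simp
  have hrg : γ.rank = Module.finrank ℂ (LinearMap.range γ.mulVecLin) := rfl
  omega
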